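/- Let (μ, W) be a matrix weight with μ ≠ 0. If S ∈ 𝒜 is skew-Hermitian (S* = −S), then S = 0. In other words, 𝒜 contains no non-zero skew-Hermitian elements. -/

import Mathlib

open Matrix MeasureTheory ComplexOrder

lemma trace_conjTranspose_mul_self_eq_zero' {m n : Type*} [Fintype m] [Fintype n]
    [DecidableEq n] {B : Matrix m n ℂ} (h : (Bᴴ * B).trace = 0) : B = 0 := by
  have hdiag : ∀ j, (Bᴴ * B) j j = dotProduct (star fun i => B i j) (fun i => B i j) := by
    intro j; simp [Matrix.mul_apply, dotProduct, Matrix.conjTranspose_apply, mul_comm]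
  have hnonneg : ∀ j ∈ Finset.univ, (0 : ℂ) ≤ (Bᴴ * B) j j := by
    intro j _
    rw [hdiag]
    exact dotProduct_star_self_nonneg _
  have h0 : ∀ j ∈ Finset.univ, (Bᴴ * B) j j = 0 := by
    rw [← Finset.sum_eq_zero_iff_of_nonneg hnonneg]
    exact h
  ext i j
  have := h0 j (Finset.mem_univ j)
  rw [hdiag] at this
  have := dotProduct_star_self_eq_zero.mp this
  exact congrFun this i

/-- For a matrix weight `(μ, W)` with `μ ≠ 0`, the real vector space `𝒜` of matrices `T`
with `T W(x) = W(x) Tᴴ` μ-a.e. contains no non-zero skew-Hermitian element. -/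
theorem no_skew_hermitian_in_A (N : ℕ) (hN : 1 ≤ N)
    (μ : Measure ℝ) [SigmaFinite μ] (hμ : μ ≠ 0)
    (W : ℝ → Matrix (Fin N) (Fin N) ℂ)
    (hWmeas : ∀ i j, Measurable fun x => W x i j)
    (hWpos : ∀ᵐ x ∂μ, (W x).PosDef)
    (S : Matrix (Fin N) (Fin N) ℂ)
    (hskew : Sᴴ = -S)
    (hS : ∀ᵐ x ∂μ, S * W x = W x * Sᴴ) :
    S = 0 := by
  have : (ae μ).NeBot := ae_neBot.mpr hμ
  obtain ⟨x, hpd, hx⟩ := (hWpos.and hS).exists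
  set V := W x with hV
  -- S * V * Sᴴ = V * (S * S)
  have key : S * V * Sᴴ = V * (S * S) := by
    rw [hx, hskew]
    simp [Matrix.mul_assoc]
  -- trace is zero
  have hSV : S * V = -(V * S) := by rw [hx, hskew]; simp
  have htr : (S * V * Sᴴ).trace = 0 := by
    have h1 : (S * V * Sᴴ).trace = (V * S * S).trace := by
      rw [key, Matrix.mul_assoc]
    have h2 : (V * S * S).trace = (S * (V * S)).trace := Matrix.trace_mul_comm (V * S) S
    have h3 : S * (V * S) = -(V * S * S) := by
      rw [← Matrix.mul_assoc, hSV]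
      simp
    rw [h3, Matrix.trace_neg] at h2
    rw [h1]
    have h4 : (V * S * S).trace + (V * S * S).trace = 0 := by
      nth_rewrite 2 [h2]; ring
    have := add_self_eq_zero.mp h4
    exact this
  -- S * V * Sᴴ is PSD, so it is BᴴB; trace zero forces it to be 0
  have hpsd : (S * V * Sᴴ).PosSemidef := hpd.posSemidef.mul_mul_conjTranspose_same S
  open scoped MatrixOrder Matrix.Norms.L2Operator in
  obtain ⟨B, hB⟩ : ∃ B, S * V * Sᴴ = Bᴴ * B :=
    CStarAlgebra.nonneg_iff_eq_star_mul_self.mp hpsd.nonneg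
  have hB0 : B = 0 := trace_conjTranspose_mul_self_eq_zero' (by rw [← hB]; exact htr)
  have hzero : S * V * Sᴴ = 0 := by rw [hB, hB0]; simp
  -- hence V * (S * S) = 0, and V is invertible
  have hSS : S * S = 0 := by
    have h5 : V * (S * S) = 0 := by rw [← key]; exact hzero
    have hinv : IsUnit V.det := hpd.det_pos.ne'.isUnit
    calc S * S = V⁻¹ * (V * (S * S)) := by
          rw [← Matrix.mul_assoc, Matrix.nonsing_inv_mul V hinv, Matrix.one_mul]
      _ = 0 := by rw [h5, Matrix.mul_zero]
  -- SᴴS = -(S*S) = 0 ⇒ S = 0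
  have : Sᴴ * S = 0 := by rw [hskew]; simp [hSS]
  exact Matrix.conjTranspose_mul_self_eq_zero.mp this
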